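/- Let Λ be a proper, source-free topological k-graph and c a continuous 𝕋-valued 2-cocycle on Λ. For f ∈ C_c(Λ^m) ⊆ X_m and g ∈ C_c(Λ^n) ⊆ X_n, define (fg)(λ) := c(λ(0,m), λ(m,m+n)) f(λ(0,m)) g(λ(m,m+n)) for λ ∈ Λ^{m+n}. Then for f₁,f₂ ∈ X_m and g₁,g₂ ∈ X_n, the identity ⟨f₁g₁, f₂g₂⟩_{X_{m+n}} = ⟨g₁, ⟨f₁,f₂⟩_{X_m} · g₂⟩_{X_n} holds, and consequently f ⊗ g ↦ fg extends to an isometric linear map X_m ⊗_{C₀(Λ⁰)} X_n → X_{m+n}. -/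

import Mathlib

/-- A topological `k`-graph (Yeend): a small category, presented algebraically on
its (second-countable, locally compact, Hausdorff) space of morphisms with
objects identified with identity morphisms, together with a continuous degree
functor `d : Λ → ℕ^k` satisfying the unique factorisation property.  The range
map is continuous, the source map is a local homeomorphism, and composition
(defined on the set of composable pairs) is continuous and open. -/
structure TopKGraph (k : ℕ) where
  M : Type
  ts : TopologicalSpace M
  t2 : @T2Space M ts
  lc : @LocallyCompactSpace M ts
  sc : @SecondCountableTopology M ts
  r : M → M
  s : M → M
  comp : M → M → M
  d : M → Fin k → ℕ
  rr : ∀ lam, r (r lam) = r lam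
  sr : ∀ lam, s (r lam) = r lam
  rs : ∀ lam, r (s lam) = s lam
  ss' : ∀ lam, s (s lam) = s lam
  r_comp : ∀ {lam mu}, s lam = r mu → r (comp lam mu) = r lam
  s_comp : ∀ {lam mu}, s lam = r mu → s (comp lam mu) = s mu
  comp_assoc : ∀ {lam mu nu}, s lam = r mu → s mu = r nu →
      comp (comp lam mu) nu = comp lam (comp mu nu)
  id_comp : ∀ lam, comp (r lam) lam = lam
  comp_id : ∀ lam, comp lam (s lam) = lam
  d_comp : ∀ {lam mu}, s lam = r mu → d (comp lam mu) = d lam + d mu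
  d_r : ∀ lam, d (r lam) = 0
  d_s : ∀ lam, d (s lam) = 0
  continuous_r : @Continuous M M ts ts r
  continuous_s : @Continuous M M ts ts s
  isLocalHomeomorph_s : @IsLocalHomeomorph M M ts ts s
  continuousOn_comp : @ContinuousOn (M × M) M (@instTopologicalSpaceProd M M ts ts) ts
      (fun p => comp p.1 p.2) {p | s p.1 = r p.2}
  isOpenMap_comp : ∀ V : Set (M × M), @IsOpen (M × M) (@instTopologicalSpaceProd M M ts ts) V →
      @IsOpen M ts ((fun p : M × M => comp p.1 p.2) '' (V ∩ {p | s p.1 = r p.2}))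
  isOpen_deg : ∀ n : Fin k → ℕ, @IsOpen M ts {lam | d lam = n}
  factor : ∀ (lam : M) (m n : Fin k → ℕ), d lam = m + n →
      ∃! p : M × M, s p.1 = r p.2 ∧ comp p.1 p.2 = lam ∧ d p.1 = m ∧ d p.2 = n

attribute [instance] TopKGraph.ts TopKGraph.t2 TopKGraph.lc TopKGraph.sc

variable {k : ℕ}

/-- An `s`-section: a set contained in an open set on which the source map is
injective (equivalently, since `s` is a local homeomorphism, on which `s`
restricts to a homeomorphism onto its image). -/
def TopKGraph.IsSSection (G : TopKGraph k) (W : Set G.M) : Prop :=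
  ∃ U : Set G.M, IsOpen U ∧ W ⊆ U ∧ Set.InjOn G.s U

/-- A topological `k`-graph is proper if, for each `m ∈ ℕ^k`, the preimage under
`r|_{Λ^m}` of any compact set is compact. -/
def TopKGraph.Proper (G : TopKGraph k) : Prop :=
  ∀ (m : Fin k → ℕ) (K : Set G.M), IsCompact K →
    IsCompact {lam : G.M | G.d lam = m ∧ G.r lam ∈ K}

/-- A topological `k`-graph is source-free if `vΛ^{e_i} ≠ ∅` for every vertex `v`
and every `i`. -/
def TopKGraph.SourceFree (G : TopKGraph k) : Prop :=
  ∀ v : G.M, G.r v = v → ∀ i : Fin k,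
    ∃ lam : G.M, G.d lam = Pi.single i 1 ∧ G.r lam = v

/-- A normalised `𝕋`-valued 2-cocycle on a topological `k`-graph. -/
def TopKGraph.IsCocycle (G : TopKGraph k) (c : G.M → G.M → Circle) : Prop :=
  (∀ lam mu nu, G.s lam = G.r mu → G.s mu = G.r nu →
      c lam mu * c (G.comp lam mu) nu = c lam (G.comp mu nu) * c mu nu) ∧
  (∀ lam, c lam (G.s lam) = 1) ∧ (∀ lam, c (G.r lam) lam = 1)

/-- A continuous normalised `𝕋`-valued 2-cocycle on a topological `k`-graph:
normalised, satisfies the cocycle identity, and is continuous on the set of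
composable pairs. -/
def TopKGraph.IsContinuousCocycle (G : TopKGraph k) (c : G.M → G.M → Circle) : Prop :=
  G.IsCocycle c ∧
    ContinuousOn (fun p : G.M × G.M => c p.1 p.2) {p | G.s p.1 = G.r p.2}
open scoped ENNReal ComplexConjugate

/-- The unique factorisation `lam = p.1 ⬝ p.2` of a path `lam` with `d(p.1) = m`
(meaningful whenever `m ≤ d lam`, by the unique factorisation property); thus
`(pathFac G m lam).1 = λ(0,m)` and, for `lam ∈ Λ^n`, `(pathFac G m lam).2 = λ(m,n)`. -/
noncomputable def TopKGraph.pathFac (G : TopKGraph k) (m : Fin k → ℕ) (lam : G.M) :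
    G.M × G.M :=
  letI := Classical.propDecidable; if h : ∃ p : G.M × G.M, G.s p.1 = G.r p.2 ∧ G.comp p.1 p.2 = lam ∧
      G.d p.1 = m ∧ G.d p.2 = G.d lam - m then h.choose else (lam, lam)

/-- An infinite path in `Λ`: a degree-preserving functor `x : Ω_k → Λ`, recorded
by its segments `x(m,n) ∈ Λ^{n-m}` for `m ≤ n` in `ℕ^k`. -/
structure TopKGraph.InfPath (G : TopKGraph k) where
  seg : (Fin k → ℕ) → (Fin k → ℕ) → G.M
  d_seg : ∀ {m n : Fin k → ℕ}, m ≤ n → G.d (seg m n) = n - m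
  seg_id : ∀ m : Fin k → ℕ, seg m m = G.r (seg m m)
  s_seg : ∀ {m n p : Fin k → ℕ}, m ≤ n → n ≤ p → G.s (seg m n) = G.r (seg n p)
  comp_seg : ∀ {m n p : Fin k → ℕ}, m ≤ n → n ≤ p →
      G.comp (seg m n) (seg n p) = seg m p

/-- The cylinder set `Z(U) = {x ∈ Λ^∞ : x(0,n) ∈ U for some n}`. -/
def TopKGraph.cyl (G : TopKGraph k) (U : Set G.M) : Set G.InfPath :=
  {x | ∃ n : Fin k → ℕ, x.seg 0 n ∈ U}

/-- The topology on the infinite-path space `Λ^∞` is generated by the cylinder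
sets `Z(U)` of open subsets `U` of the `Λ^n`, `n ∈ ℕ^k`. -/
instance TopKGraph.instTopInfPath (G : TopKGraph k) : TopologicalSpace G.InfPath :=
  TopologicalSpace.generateFrom
    {S | ∃ (n : Fin k → ℕ) (U : Set G.M), IsOpen U ∧ (∀ lam ∈ U, G.d lam = n) ∧
      S = G.cyl U}

/-- The shift map `T^p : Λ^∞ → Λ^∞`, `T^p(x)(m,n) = x(m+p, n+p)`. -/
def TopKGraph.shift (G : TopKGraph k) (p : Fin k → ℕ) (x : G.InfPath) : G.InfPath where
  seg m n := x.seg (m + p) (n + p)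
  d_seg := by
    intro m n h
    rw [x.d_seg (add_le_add h (le_refl p))]
    funext i
    simp only [Pi.sub_apply, Pi.add_apply]
    omega
  seg_id m := x.seg_id (m + p)
  s_seg := fun h1 h2 => x.s_seg (add_le_add h1 (le_refl p)) (add_le_add h2 (le_refl p))
  comp_seg := fun h1 h2 => x.comp_seg (add_le_add h1 (le_refl p)) (add_le_add h2 (le_refl p))

/-- The `C₀(Λ⁰)`-valued inner product on `X_p`:
`⟨f,g⟩_{X_p}(v) = Σ_{λ ∈ Λ^p v} conj (f λ) * g λ`. -/
noncomputable def TopKGraph.ipX (G : TopKGraph k) (p : Fin k → ℕ)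
    (f g : G.M → ℂ) : G.M → ℂ :=
  fun v => ∑' lam : {lam : G.M // G.d lam = p ∧ G.s lam = v}, conj (f lam.1) * g lam.1

/-- The twisted product `X_m × X_n → X_{m+n}`:
`(f·g)(λ) = c(λ(0,m), λ(m,m+n)) f(λ(0,m)) g(λ(m,m+n))` for `λ ∈ Λ^{m+n}`. -/
noncomputable def TopKGraph.prodX (G : TopKGraph k) (c : G.M → G.M → Circle)
    (m : Fin k → ℕ) (f g : G.M → ℂ) : G.M → ℂ :=
  fun lam => (c (G.pathFac m lam).1 (G.pathFac m lam).2 : ℂ) *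
    f (G.pathFac m lam).1 * g (G.pathFac m lam).2

section Aux

variable {k : ℕ}

/-- Specification of `pathFac` when `d lam = m + n`. -/
lemma TopKGraph.pathFac_spec (G : TopKGraph k) {m n : Fin k → ℕ} {lam : G.M}
    (h : G.d lam = m + n) :
    G.s (G.pathFac m lam).1 = G.r (G.pathFac m lam).2 ∧
      G.comp (G.pathFac m lam).1 (G.pathFac m lam).2 = lam ∧
      G.d (G.pathFac m lam).1 = m ∧ G.d (G.pathFac m lam).2 = n := by
  have hmn : G.d lam - m = n := by
    funext i
    simp only [Pi.sub_apply, h, Pi.add_apply]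
    omega
  obtain ⟨p, hp, -⟩ := G.factor lam m n h
  have hex : ∃ p : G.M × G.M, G.s p.1 = G.r p.2 ∧ G.comp p.1 p.2 = lam ∧
      G.d p.1 = m ∧ G.d p.2 = G.d lam - m :=
    ⟨p, hp.1, hp.2.1, hp.2.2.1, by rw [hmn]; exact hp.2.2.2⟩
  simp only [TopKGraph.pathFac]
  rw [dif_pos hex]
  exact ⟨hex.choose_spec.1, hex.choose_spec.2.1, hex.choose_spec.2.2.1,
    hmn ▸ hex.choose_spec.2.2.2⟩

/-- `pathFac` recovers a given factorisation. -/
lemma TopKGraph.pathFac_comp (G : TopKGraph k) {m n : Fin k → ℕ} {x y : G.M}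
    (hxy : G.s x = G.r y) (hx : G.d x = m) (hy : G.d y = n) :
    G.pathFac m (G.comp x y) = (x, y) := by
  have hd : G.d (G.comp x y) = m + n := by rw [G.d_comp hxy, hx, hy]
  obtain ⟨p, -, hup⟩ := G.factor (G.comp x y) m n hd
  obtain ⟨h1, h2, h3, h4⟩ := G.pathFac_spec hd
  have e1 : G.pathFac m (G.comp x y) = p := hup _ ⟨h1, h2, h3, h4⟩
  have e2 : (x, y) = p := hup _ ⟨hxy, rfl, hx, hy⟩
  rw [e1, e2]

/-- Fibres of the source map over a compact set are finite. -/
lemma TopKGraph.finite_fiber (G : TopKGraph k) {C : Set G.M} (hC : IsCompact C)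
    (v : G.M) : {x | x ∈ C ∧ G.s x = v}.Finite := by
  choose e he hes using G.isLocalHomeomorph_s
  obtain ⟨t, ht⟩ := hC.elim_finite_subcover (fun x : G.M => (e x).source)
    (fun x => (e x).open_source) (fun x hx => Set.mem_iUnion.2 ⟨x, he x⟩)
  have hsub : ∀ i : G.M, ({x | x ∈ C ∧ G.s x = v} ∩ (e i).source).Finite := by
    intro i
    apply Set.Subsingleton.finite
    rintro x ⟨⟨-, hx⟩, hxs⟩ y ⟨⟨-, hy⟩, hys⟩
    apply (e i).injOn hxs hys
    rw [← congrFun (hes i) x, ← congrFun (hes i) y, hx, hy]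
  refine Set.Finite.subset (Set.Finite.biUnion t.finite_toSet fun i _ => hsub i) ?_
  rintro x hx
  have hC' := ht hx.1
  simp only [Set.mem_iUnion] at hC'
  obtain ⟨i, hit, hi⟩ := hC'
  exact Set.mem_biUnion hit ⟨hx, hi⟩

end Aux

/-- Let `Λ` be a proper, source-free topological `k`-graph and
`c` a continuous `𝕋`-valued 2-cocycle on `Λ`.  For `f ∈ C_c(Λ^m) ⊆ X_m` and
`g ∈ C_c(Λ^n) ⊆ X_n`, define
`(fg)(λ) = c(λ(0,m),λ(m,m+n)) f(λ(0,m)) g(λ(m,m+n))` for `λ ∈ Λ^{m+n}`.  Then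
for `f₁, f₂ ∈ X_m` and `g₁, g₂ ∈ X_n`, the identity
`⟨f₁g₁, f₂g₂⟩_{X_{m+n}} = ⟨g₁, ⟨f₁,f₂⟩_{X_m} · g₂⟩_{X_n}` holds (so that
`f ⊗ g ↦ fg` extends to an isometric linear map
`X_m ⊗_{C₀(Λ⁰)} X_n → X_{m+n}`). -/
theorem finite_path_inner_product_identity {k : ℕ} (G : TopKGraph k)
    (hP : G.Proper) (hSF : G.SourceFree)
    (c : G.M → G.M → Circle) (hc : G.IsContinuousCocycle c)
    (m n : Fin k → ℕ) (f₁ f₂ g₁ g₂ : G.M → ℂ)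
    (hf₁ : Continuous f₁) (hf₁c : HasCompactSupport f₁)
    (hf₁d : ∀ lam, f₁ lam ≠ 0 → G.d lam = m)
    (hf₂ : Continuous f₂) (hf₂c : HasCompactSupport f₂)
    (hf₂d : ∀ lam, f₂ lam ≠ 0 → G.d lam = m)
    (hg₁ : Continuous g₁) (hg₁c : HasCompactSupport g₁)
    (hg₁d : ∀ lam, g₁ lam ≠ 0 → G.d lam = n)
    (hg₂ : Continuous g₂) (hg₂c : HasCompactSupport g₂)
    (hg₂d : ∀ lam, g₂ lam ≠ 0 → G.d lam = n) :
    G.ipX (m + n) (G.prodX c m f₁ g₁) (G.prodX c m f₂ g₂)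
      = G.ipX n g₁ (fun lam => G.ipX m f₁ f₂ (G.r lam) * g₂ lam) := by
  funext v
  classical
  -- The sigma type indexing pairs (μ, ν) with d μ = n, s μ = v, d ν = m, s ν = r μ
  set Sig := (Σ mu : {mu : G.M // G.d mu = n ∧ G.s mu = v},
      {nu : G.M // G.d nu = m ∧ G.s nu = G.r mu.1}) with hSig
  -- the map to paths of degree m + n
  have hdeg : ∀ σ : Sig, G.d (G.comp σ.2.1 σ.1.1) = m + n ∧
      G.s (G.comp σ.2.1 σ.1.1) = v := fun σ =>
    ⟨by rw [G.d_comp σ.2.2.2, σ.2.2.1, σ.1.2.1], by rw [G.s_comp σ.2.2.2, σ.1.2.2]⟩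
  have hbij : Function.Bijective (fun σ : Sig =>
      (⟨G.comp σ.2.1 σ.1.1, hdeg σ⟩ : {lam : G.M // G.d lam = m + n ∧ G.s lam = v})) := by
    constructor
    · rintro ⟨⟨mu, hmu⟩, ⟨nu, hnu⟩⟩ ⟨⟨mu', hmu'⟩, ⟨nu', hnu'⟩⟩ h
      have h' : G.comp nu mu = G.comp nu' mu' := congrArg Subtype.val h
      have p1 : G.pathFac m (G.comp nu mu) = (nu, mu) :=
        G.pathFac_comp hnu.2 hnu.1 hmu.1
      have p2 : G.pathFac m (G.comp nu' mu') = (nu', mu') :=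
        G.pathFac_comp hnu'.2 hnu'.1 hmu'.1
      rw [h', p2] at p1
      obtain ⟨e1, e2⟩ := Prod.mk.injEq .. ▸ p1
      subst e1; subst e2; rfl
    · rintro ⟨lam, hdl, hsl⟩
      obtain ⟨h1, h2, h3, h4⟩ := G.pathFac_spec hdl
      have hs2 : G.s (G.pathFac m lam).2 = v :=
        calc G.s (G.pathFac m lam).2
            = G.s (G.comp (G.pathFac m lam).1 (G.pathFac m lam).2) :=
              (G.s_comp h1).symm
          _ = G.s lam := by rw [h2]
          _ = v := hsl
      exact ⟨⟨⟨(G.pathFac m lam).2, h4, hs2⟩, ⟨(G.pathFac m lam).1, h3, h1⟩⟩,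
        Subtype.ext h2⟩
  -- the common summand on the sigma type
  set H : Sig → ℂ := fun σ =>
    conj (g₁ σ.1.1) * ((conj (f₁ σ.2.1) * f₂ σ.2.1) * g₂ σ.1.1) with hH
  -- finiteness of the support of H
  have hfin : {σ : Sig | H σ ≠ 0}.Finite := by
    have hS1 : {x | x ∈ tsupport g₁ ∧ G.s x = v}.Finite :=
      G.finite_fiber hg₁c v
    have hT : (⋃ w ∈ {x | x ∈ tsupport g₁ ∧ G.s x = v},
        {y | y ∈ tsupport f₁ ∧ G.s y = G.r w}).Finite :=
      Set.Finite.biUnion hS1 fun w _ => G.finite_fiber hf₁c (G.r w)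
    have hS : ((⋃ w ∈ {x | x ∈ tsupport g₁ ∧ G.s x = v},
        {y | y ∈ tsupport f₁ ∧ G.s y = G.r w}) ×ˢ
        {x | x ∈ tsupport g₁ ∧ G.s x = v}).Finite := hT.prod hS1
    have hinj : Function.Injective (fun σ : Sig => (σ.2.1, σ.1.1)) := by
      rintro ⟨⟨mu, hmu⟩, ⟨nu, hnu⟩⟩ ⟨⟨mu', hmu'⟩, ⟨nu', hnu'⟩⟩ h
      obtain ⟨e1, e2⟩ := Prod.mk.injEq .. ▸ h
      subst e1; subst e2; rfl
    refine Set.Finite.of_finite_image (hS.subset ?_) hinj.injOn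
    rintro _ ⟨σ, hσ, rfl⟩
    show ((σ.2.1 : G.M), (σ.1.1 : G.M)) ∈ _
    have hg1 : g₁ σ.1.1 ≠ 0 := fun h0 => hσ (by simp [hH, h0])
    have hf1 : f₁ σ.2.1 ≠ 0 := fun h0 => hσ (by simp [hH, h0])
    have hmuS : σ.1.1 ∈ {x | x ∈ tsupport g₁ ∧ G.s x = v} :=
      ⟨subset_tsupport g₁ hg1, σ.1.2.2⟩
    refine ⟨Set.mem_biUnion hmuS ⟨subset_tsupport f₁ hf1, σ.2.2.2⟩, hmuS⟩
  have hsum : Summable H :=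
    summable_of_ne_finset_zero (s := hfin.toFinset) fun σ hσ => by
      by_contra h0
      exact hσ (hfin.mem_toFinset.2 h0)
  -- compare summands under the bijection
  have hstep : ∀ σ : Sig,
      conj (G.prodX c m f₁ g₁ (G.comp σ.2.1 σ.1.1)) *
        G.prodX c m f₂ g₂ (G.comp σ.2.1 σ.1.1) = H σ := by
    intro σ
    have hpf : G.pathFac m (G.comp σ.2.1 σ.1.1) = (σ.2.1, σ.1.1) :=
      G.pathFac_comp σ.2.2.2 σ.2.2.1 σ.1.2.1
    have hcc : conj ((c σ.2.1 σ.1.1 : ℂ)) * ((c σ.2.1 σ.1.1 : ℂ)) = 1 := by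
      rw [← Circle.coe_inv_eq_conj, ← Circle.coe_mul, inv_mul_cancel, Circle.coe_one]
    simp only [TopKGraph.prodX, hpf, hH]
    calc conj ((c σ.2.1 σ.1.1 : ℂ) * f₁ σ.2.1 * g₁ σ.1.1) *
        ((c σ.2.1 σ.1.1 : ℂ) * f₂ σ.2.1 * g₂ σ.1.1)
        = (conj ((c σ.2.1 σ.1.1 : ℂ)) * ((c σ.2.1 σ.1.1 : ℂ))) *
          (conj (g₁ σ.1.1) * ((conj (f₁ σ.2.1) * f₂ σ.2.1) * g₂ σ.1.1)) := by
          simp only [map_mul]; ring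
      _ = conj (g₁ σ.1.1) * ((conj (f₁ σ.2.1) * f₂ σ.2.1) * g₂ σ.1.1) := by
          rw [hcc, one_mul]
  -- now compute
  simp only [TopKGraph.ipX]
  calc (∑' lam : {lam : G.M // G.d lam = m + n ∧ G.s lam = v},
        conj (G.prodX c m f₁ g₁ lam.1) * G.prodX c m f₂ g₂ lam.1)
      = ∑' σ : Sig, conj (G.prodX c m f₁ g₁ (G.comp σ.2.1 σ.1.1)) *
          G.prodX c m f₂ g₂ (G.comp σ.2.1 σ.1.1) :=
        ((Equiv.ofBijective _ hbij).tsum_eq fun lam =>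
          conj (G.prodX c m f₁ g₁ lam.1) * G.prodX c m f₂ g₂ lam.1).symm
    _ = ∑' σ : Sig, H σ := tsum_congr hstep
    _ = ∑' (mu : {mu : G.M // G.d mu = n ∧ G.s mu = v})
          (nu : {nu : G.M // G.d nu = m ∧ G.s nu = G.r mu.1}), H ⟨mu, nu⟩ :=
        hsum.tsum_sigma
    _ = ∑' mu : {mu : G.M // G.d mu = n ∧ G.s mu = v},
          conj (g₁ mu.1) *
            ((∑' nu : {nu : G.M // G.d nu = m ∧ G.s nu = G.r mu.1},
              conj (f₁ nu.1) * f₂ nu.1) * g₂ mu.1) := by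
        refine tsum_congr fun mu => ?_
        rw [← tsum_mul_right, ← tsum_mul_left]
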